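/- Let s be a binary string and t_1,…,t_n binary strings with Σ_{i=1}^n |t_i| = |s|. If the String Crafting instance (s; t_1,…,t_n) has a solution, then the disjoint union of the caterpillars C(t_1),…,C(t_n) is isomorphic to a subgraph of the caterpillar C(s). -/
import Mathlib


theorem perm_getEquiv {α : Type*} {l₁ l₂ : List α} (h : l₁.Perm l₂) :
    ∃ e : Fin l₂.length ≃ Fin l₁.length, ∀ i, l₂.get i = l₁.get (e i) := by
  induction h with
  | nil => exact ⟨Equiv.refl _, fun i => i.elim0⟩
  | cons x h ih =>
    obtain ⟨e, he⟩ := ih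
    refine ⟨(finSuccEquiv _).trans ((Equiv.optionCongr e).trans (finSuccEquiv _).symm), ?_⟩
    intro i
    induction i using Fin.cases with
    | zero => simp
    | succ j => simpa using he j
  | swap x y l =>
    refine ⟨Equiv.swap (0 : Fin (l.length+1+1)) (1 : Fin (l.length+1+1)), ?_⟩
    intro i
    induction i using Fin.cases with
    | zero => simp [Equiv.swap_apply_left]
    | succ j =>
      induction j using Fin.cases with
      | zero => simp [Equiv.swap_apply_right]
      | succ k =>
        have hk : (Equiv.swap (0 : Fin (l.length+1+1)) 1) k.succ.succ = k.succ.succ :=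
          Equiv.swap_apply_of_ne_of_ne (Fin.succ_ne_zero _) (by simp [Fin.ext_iff])
        show (x :: y :: l).get k.succ.succ =
          (y :: x :: l).get ((Equiv.swap (0 : Fin (l.length+1+1)) 1) k.succ.succ)
        rw [hk]
        rfl
  | trans h1 h2 ih1 ih2 =>
    obtain ⟨e1, he1⟩ := ih1
    obtain ⟨e2, he2⟩ := ih2
    exact ⟨e2.trans e1, fun i => (he2 i).trans (he1 _)⟩

def off (u : List (List Bool)) (k : ℕ) : ℕ := ((u.take k).map List.length).sum

theorem off_succ (u : List (List Bool)) (k : ℕ) (hk : k < u.length) :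
    off u (k + 1) = off u k + u[k].length := by
  unfold off
  rw [List.map_take, List.map_take, List.sum_take_succ _ k (by simpa using hk)]
  simp

theorem off_le_sum (u : List (List Bool)) (k : ℕ) :
    off u k ≤ (u.map List.length).sum := by
  unfold off
  rw [List.map_take, ← List.sum_take_add_sum_drop (u.map List.length) k]
  exact Nat.le_add_right _ _

theorem off_mono (u : List (List Bool)) {a b : ℕ} (h : a ≤ b) : off u a ≤ off u b := by
  unfold off
  have h1 : u.take a = (u.take b).take a := by rw [List.take_take, min_eq_left h]
  rw [h1, List.map_take, ← List.sum_take_add_sum_drop ((u.take b).map List.length) a]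
  exact Nat.le_add_right _ _

theorem flatten_getD (u : List (List Bool)) : ∀ (k : ℕ) (hk : k < u.length) (j : ℕ)
    (hj : j < u[k].length), u.flatten.getD (off u k + j) false = u[k][j] := by
  induction u with
  | nil => intro k hk; exact absurd hk (Nat.not_lt_zero k)
  | cons a u ih =>
    intro k hk j hj
    cases k with
    | zero =>
      simp only [List.getElem_cons_zero] at hj ⊢
      have hoff : off (a :: u) 0 = 0 := rfl
      rw [hoff, Nat.zero_add, List.flatten_cons, List.getD_append _ _ _ _ hj,
        List.getD_eq_getElem _ _ hj]
    | succ k =>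
      have hk' : k < u.length := by simpa using hk
      have hoff : off (a :: u) (k + 1) = a.length + off u k := by
        unfold off; rw [List.take_succ_cons]; simp
      rw [hoff, List.flatten_cons,
        List.getD_append_right _ _ _ _ (by omega)]
      have : a.length + off u k + j - a.length = off u k + j := by omega
      rw [this]
      exact ih k hk' j hj


/-- A solution of the String Crafting instance `(s; t_1,…,t_n)`: a reordering `u` of the
collection `ts` such that wherever the concatenation of `u` has a `1`, `s` has a `1`. -/
def SCSol (s : List Bool) (ts : List (List Bool)) : Prop :=
  ∃ u : List (List Bool), u.Perm ts ∧
    ∀ p : ℕ, u.flatten.getD p false = true → s.getD p false = true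

/-- Vertices of the caterpillar `C(w)`: path vertices `v_1,…,v_{|w|}` (`Sum.inl`) and,
for each position `i` with `w(i) = 1`, a hair vertex `h_i` (`Sum.inr`). -/
abbrev CatV (w : List Bool) : Type := Fin w.length ⊕ {i : Fin w.length // w.get i = true}

/-- The edges of a caterpillar, as a relation between vertex types of (possibly two
different) caterpillars: consecutive path vertices are adjacent, and each hair vertex is
adjacent to the path vertex at its position. -/
def catRel (w₁ w₂ : List Bool) : CatV w₁ → CatV w₂ → Prop
  | Sum.inl i, Sum.inl j => i.val + 1 = j.val
  | Sum.inl i, Sum.inr h => i.val = h.val.val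
  | _, _ => False

/-- The caterpillar `C(w)`. -/
def Cat (w : List Bool) : SimpleGraph (CatV w) := SimpleGraph.fromRel (catRel w w)

/-- The disjoint union of the caterpillars `C(t_1),…,C(t_n)`. -/
def CatUnion (ts : List (List Bool)) : SimpleGraph (Σ i : Fin ts.length, CatV (ts.get i)) :=
  SimpleGraph.fromRel (fun a b => a.1 = b.1 ∧ catRel (ts.get a.1) (ts.get b.1) a.2 b.2)

/-- If the String Crafting instance `(s; t_1,…,t_n)` has a solution, then the disjoint union
of the caterpillars `C(t_1),…,C(t_n)` is isomorphic to a subgraph of the caterpillar `C(s)`. -/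
theorem catUnion_subgraph_of_stringCrafting (s : List Bool) (ts : List (List Bool))
    (hlen : (ts.map List.length).sum = s.length)
    (hsol : SCSol s ts) :
    ∃ f : (Σ i : Fin ts.length, CatV (ts.get i)) → CatV s,
      Function.Injective f ∧
      ∀ u v, (CatUnion ts).Adj u v → (Cat s).Adj (f u) (f v) := by
  obtain ⟨u, hperm, hs⟩ := hsol
  obtain ⟨e, he⟩ := perm_getEquiv hperm
  have hsum : (u.map List.length).sum = s.length := by
    rw [← hlen]; exact (hperm.map List.length).sum_eq
  have hlen' : ∀ i : Fin ts.length, (ts.get i).length = u[(e i).val].length := by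
    intro i; rw [he i]; rfl
  -- bound
  have hb : ∀ (i : Fin ts.length) (j : ℕ), j < (ts.get i).length →
      off u (e i) + j < s.length := by
    intro i j hj
    rw [hlen' i] at hj
    have h1 := off_succ u (e i) (e i).isLt
    have h2 := off_le_sum u ((e i).val + 1)
    omega
  -- truth at hair positions
  have ht : ∀ (i : Fin ts.length) (j : Fin (ts.get i).length),
      (ts.get i).get j = true → s.getD (off u (e i) + j.val) false = true := by
    intro i j hj
    apply hs
    rw [flatten_getD u (e i) (e i).isLt j.val (by rw [← hlen' i]; exact j.isLt)]
    rw [List.getElem_of_eq (show u[(e i).val] = ts.get i from (he i).symm)]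
    exact hj
  -- positional injectivity
  have hkey : ∀ (a b : Fin u.length) (c : ℕ), c < u[a.val].length → a.val < b.val →
      off u a + c < off u b := by
    intro a b c hc hab
    have h1 := off_succ u a a.isLt
    have h2 := off_mono u (show a.val + 1 ≤ b.val from hab)
    omega
  have hposinj : ∀ (i i' : Fin ts.length) (j j' : ℕ), j < (ts.get i).length →
      j' < (ts.get i').length → off u (e i) + j = off u (e i') + j' → i = i' ∧ j = j' := by
    intro i i' j j' hj hj' heq
    rw [hlen' i] at hj
    rw [hlen' i'] at hj'
    rcases lt_trichotomy (e i).val (e i').val with h | h | h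
    · exact absurd (hkey _ _ _ hj h) (by omega)
    · have hii : i = i' := e.injective (Fin.ext h)
      subst hii
      exact ⟨rfl, by omega⟩
    · exact absurd (hkey _ _ _ hj' h) (by omega)
  refine ⟨fun x => match x with
    | ⟨i, Sum.inl j⟩ => Sum.inl ⟨off u (e i) + j.val, hb i j.val j.isLt⟩
    | ⟨i, Sum.inr h⟩ => Sum.inr ⟨⟨off u (e i) + h.val.val, hb i h.val.val h.val.isLt⟩, by
        rw [List.get_eq_getElem, ← List.getD_eq_getElem s false (hb i h.val.val h.val.isLt)]
        exact ht i h.val h.property⟩, ?_, ?_⟩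
  · -- injectivity
    rintro ⟨i, x⟩ ⟨i', y⟩ hxy
    cases x with
    | inl j =>
      cases y with
      | inl j' =>
        simp only [Sum.inl.injEq, Fin.mk.injEq] at hxy
        obtain ⟨hii, hjj⟩ := hposinj i i' j.val j'.val j.isLt j'.isLt hxy
        subst hii
        have : j = j' := Fin.ext hjj
        subst this
        rfl
      | inr h' => simp at hxy
    | inr h =>
      cases y with
      | inl j' => simp at hxy
      | inr h' =>
        simp only [Sum.inr.injEq, Subtype.mk.injEq, Fin.mk.injEq] at hxy
        obtain ⟨hii, hjj⟩ := hposinj i i' h.val.val h'.val.val h.val.isLt h'.val.isLt hxy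
        subst hii
        have : h = h' := Subtype.ext (Fin.ext hjj)
        subst this
        rfl
  · -- adjacency
    rintro ⟨i, x⟩ ⟨i', y⟩ hadj
    rw [CatUnion, SimpleGraph.fromRel_adj] at hadj
    obtain ⟨hne, hr⟩ := hadj
    rw [Cat, SimpleGraph.fromRel_adj]
    rcases hr with ⟨hii, hrel⟩ | ⟨hii, hrel⟩
    · dsimp only at hii
      subst hii
      cases x with
      | inl j =>
        cases y with
        | inl j' =>
          simp only [catRel] at hrel
          constructor
          · simp only [ne_eq, Sum.inl.injEq, Fin.mk.injEq]
            omega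
          · left; simp only [catRel]; omega
        | inr h' =>
          simp only [catRel] at hrel
          refine ⟨by simp, Or.inl ?_⟩
          simp only [catRel]
          omega
      | inr h =>
        cases y with
        | inl j' => exact absurd hrel (by simp [catRel])
        | inr h' => exact absurd hrel (by simp [catRel])
    · dsimp only at hii
      subst hii
      cases x with
      | inl j =>
        cases y with
        | inl j' =>
          simp only [catRel] at hrel
          constructor
          · simp only [ne_eq, Sum.inl.injEq, Fin.mk.injEq]
            omega
          · right; simp only [catRel]; omega
        | inr h' =>
          simp only [catRel] at hrel
      | inr h =>
        cases y with
        | inl j' =>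
          simp only [catRel] at hrel
          refine ⟨by simp, Or.inr ?_⟩
          simp only [catRel]
          omega
        | inr h' =>
          simp only [catRel] at hrel
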